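/- arXiv:math-ph/0107016 — 2 statements merged into one kernel-verified Lean document; each statement's English description precedes it below -/
import Mathlib

section
/- Let ρ(t) > 0 and a(t) be twice continuously differentiable, F : ℝ → ℝ differentiable, and define V(x,t) = ((ρ̈a − ρä)/ρ)x − ½(ρ̈/ρ)x² + ρ⁻²F((x−a)/ρ). Then along any solution x(t) of ẍ = −∂V/∂x, the quantity I(x,ẋ,t) = ½[ρ(ẋ − ȧ) − ρ̇(x − a)]² + F((x − a)/ρ) is constant. -/
/-- Let `ρ(t) > 0` and `a(t)` be C², `F` differentiable, and
`V(x,t) = ((ρ̈a − ρä)/ρ)x − ½(ρ̈/ρ)x² + ρ⁻²F((x−a)/ρ)`.  Then along any C²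
solution of `ẍ = −∂V/∂x`, the Noether invariant
`I = ½[ρ(ẋ − ȧ) − ρ̇(x − a)]² + F((x − a)/ρ)` is constant. -/
theorem noether_invariant_is_constant
    (ρ a : ℝ → ℝ) (F : ℝ → ℝ) (x : ℝ → ℝ)
    (hρ : ContDiff ℝ 2 ρ) (hρpos : ∀ t, 0 < ρ t)
    (ha : ContDiff ℝ 2 a)
    (hF : Differentiable ℝ F)
    (hx : ContDiff ℝ 2 x)
    (V : ℝ → ℝ → ℝ)
    (hV : ∀ y t : ℝ, V y t =
      ((deriv (deriv ρ) t * a t - ρ t * deriv (deriv a) t) / ρ t) * y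
      - 1/2 * (deriv (deriv ρ) t / ρ t) * y^2
      + (ρ t)⁻¹ ^ 2 * F ((y - a t) / ρ t))
    -- Newton's equation ẍ = −∂V/∂x along the path:
    (heq : ∀ t : ℝ, deriv (deriv x) t = - deriv (fun y => V y t) (x t)) :
    ∀ t₁ t₂ : ℝ,
      (1/2 * (ρ t₁ * (deriv x t₁ - deriv a t₁) - deriv ρ t₁ * (x t₁ - a t₁))^2
        + F ((x t₁ - a t₁) / ρ t₁))
      = (1/2 * (ρ t₂ * (deriv x t₂ - deriv a t₂) - deriv ρ t₂ * (x t₂ - a t₂))^2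
        + F ((x t₂ - a t₂) / ρ t₂)) := by
  -- first derivatives are differentiable
  have hρ1 : Differentiable ℝ ρ := hρ.differentiable two_ne_zero
  have ha1 : Differentiable ℝ a := ha.differentiable two_ne_zero
  have hx1 : Differentiable ℝ x := hx.differentiable two_ne_zero
  have hρ2 : Differentiable ℝ (deriv ρ) :=
    (contDiff_succ_iff_deriv.mp (by exact_mod_cast hρ : ContDiff ℝ (1+1) ρ)).2.2.differentiable
      one_ne_zero
  have ha2 : Differentiable ℝ (deriv a) :=
    (contDiff_succ_iff_deriv.mp (by exact_mod_cast ha : ContDiff ℝ (1+1) a)).2.2.differentiable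
      one_ne_zero
  have hx2 : Differentiable ℝ (deriv x) :=
    (contDiff_succ_iff_deriv.mp (by exact_mod_cast hx : ContDiff ℝ (1+1) x)).2.2.differentiable
      one_ne_zero
  set I : ℝ → ℝ := fun t =>
    1/2 * (ρ t * (deriv x t - deriv a t) - deriv ρ t * (x t - a t))^2
      + F ((x t - a t) / ρ t) with hIdef
  have key : ∀ t, HasDerivAt I 0 t := by
    intro t
    have hr : (ρ t) ≠ 0 := (hρpos t).ne'
    -- abbreviations
    set r := ρ t
    set r' := deriv ρ t
    set r'' := deriv (deriv ρ) t
    set A := a t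
    set A' := deriv a t
    set A'' := deriv (deriv a) t
    set X := x t
    set X' := deriv x t
    set f' := deriv F ((X - A) / r)
    -- derivative of y ↦ V y t at X
    have hinner : HasDerivAt (fun y : ℝ => (y - A) / r) (1 / r) X := by
      simpa using ((hasDerivAt_id X).sub_const A).div_const r
    have hFc : HasDerivAt (fun y : ℝ => F ((y - A) / r)) (f' * (1 / r)) X := by
      have := ((hF ((X - A) / r)).hasDerivAt).comp X hinner
      exact this
    have hVd : HasDerivAt (fun y => V y t)
        ((r'' * A - r * A'') / r - 1/2 * (r'' / r) * (2 * X)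
          + r⁻¹ ^ 2 * (f' * (1 / r))) X := by
      have h1 : HasDerivAt (fun y : ℝ => ((r'' * A - r * A'') / r) * y)
          ((r'' * A - r * A'') / r) X := by
        simpa using (hasDerivAt_id X).const_mul ((r'' * A - r * A'') / r)
      have h2 : HasDerivAt (fun y : ℝ => 1/2 * (r'' / r) * y ^ 2)
          (1/2 * (r'' / r) * (2 * X)) X := by
        have := ((hasDerivAt_pow 2 X)).const_mul (1/2 * (r'' / r))
        simpa [mul_comm, mul_assoc, mul_left_comm] using this
      have h3 := hFc.const_mul (r⁻¹ ^ 2)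
      have := (h1.sub h2).add h3
      refine HasDerivAt.congr_deriv (this.congr_of_eventuallyEq ?_) (by ring)
      filter_upwards with y
      rw [hV y t]
      rfl
    have hVval : deriv (fun y => V y t) X =
        (r'' * A - r * A'') / r - 1/2 * (r'' / r) * (2 * X)
          + r⁻¹ ^ 2 * (f' * (1 / r)) := hVd.deriv
    -- second derivative of x from Newton's equation
    have hx'' : HasDerivAt (deriv x) (deriv (deriv x) t) t := (hx2 t).hasDerivAt
    -- derivative of I
    have hu : HasDerivAt (fun s => (x s - a s) / ρ s)
        (((X' - A') * r - (X - A) * r') / r ^ 2) t :=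
      (((hx1 t).hasDerivAt.sub (ha1 t).hasDerivAt)).div (hρ1 t).hasDerivAt hr
    have hFu : HasDerivAt (fun s => F ((x s - a s) / ρ s))
        (f' * (((X' - A') * r - (X - A) * r') / r ^ 2)) t :=
      ((hF ((X - A) / r)).hasDerivAt).comp t hu
    have hp : HasDerivAt (fun s => ρ s * (deriv x s - deriv a s) - deriv ρ s * (x s - a s))
        (r' * (X' - A') + r * (deriv (deriv x) t - A'')
          - (r'' * (X - A) + r' * (X' - A'))) t :=
      ((hρ1 t).hasDerivAt.mul (hx''.sub (ha2 t).hasDerivAt)).sub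
        ((hρ2 t).hasDerivAt.mul ((hx1 t).hasDerivAt.sub (ha1 t).hasDerivAt))
    have hI : HasDerivAt I
        (1/2 * (2 * (r * (X' - A') - r' * (X - A)) *
            (r' * (X' - A') + r * (deriv (deriv x) t - A'')
              - (r'' * (X - A) + r' * (X' - A'))))
          + f' * (((X' - A') * r - (X - A) * r') / r ^ 2)) t := by
      have hsq : HasDerivAt
          (fun s => (ρ s * (deriv x s - deriv a s) - deriv ρ s * (x s - a s)) ^ 2)
          (2 * (r * (X' - A') - r' * (X - A)) *
            (r' * (X' - A') + r * (deriv (deriv x) t - A'')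
              - (r'' * (X - A) + r' * (X' - A')))) t := by
        have := ((hasDerivAt_pow 2 (r * (X' - A') - r' * (X - A)))).comp t hp
        simpa [Function.comp_def, mul_comm, mul_assoc, mul_left_comm] using this
      simpa [hIdef, Pi.add_def] using (hsq.const_mul (1/2 : ℝ)).add hFu
    refine hI.congr_deriv ?_
    rw [heq t, hVval]
    field_simp
    ring
  have hdiff : Differentiable ℝ I := fun t => (key t).differentiableAt
  have hconst : ∀ t₁ t₂, I t₁ = I t₂ := by
    intro t₁ t₂
    have := is_const_of_deriv_eq_zero hdiff (fun t => (key t).deriv) t₁ t₂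
    exact this
  exact hconst
end

section
/- With ρ(t) > 0 and a(t) twice differentiable, the Lagrangian L = ½ẋ² − V(x,t) with V(x,t) = ((ρ̈a − ρä)/ρ)x − ½(ρ̈/ρ)x² + ρ⁻²F((x−a)/ρ) decomposes along any C² path x(t) as L = dX/dt + L₀, where X(t) = (ρ̇/(2ρ))x² + (W/ρ)x − G, W = ȧρ − aρ̇, G(t) = ∫_{t'}^t W²/(2ρ²)ds, and L₀ = (ρ²/2)[d/dt((x−a)/ρ)]² − ρ⁻²F((x−a)/ρ). -/
/-- With `ρ > 0` and `a` twice differentiable, the Lagrangian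
`L = ½ẋ² − V(x,t)` with
`V(x,t) = ((ρ̈a − ρä)/ρ)x − ½(ρ̈/ρ)x² + ρ⁻²F((x−a)/ρ)` decomposes along any path as
`L = dX/dt + L₀`, where `X = (ρ̇/(2ρ))x² + (W/ρ)x − G`, `W = ȧρ − aρ̇`,
`G(t) = ∫_{t'}^t W²/(2ρ²) ds`, and `L₀ = (ρ²/2)[d/dt((x−a)/ρ)]² − ρ⁻²F((x−a)/ρ)`. -/
theorem lagrangian_total_derivative_decomposition
    (ρ a F x : ℝ → ℝ) (t' : ℝ)
    (hρ : ContDiff ℝ 2 ρ) (hρpos : ∀ t, 0 < ρ t)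
    (ha : ContDiff ℝ 2 a)
    (hF : Continuous F)
    (hx : ContDiff ℝ 1 x)
    (V : ℝ → ℝ → ℝ)
    (hV : ∀ y t : ℝ, V y t =
      ((deriv (deriv ρ) t * a t - ρ t * deriv (deriv a) t) / ρ t) * y
      - 1/2 * (deriv (deriv ρ) t / ρ t) * y^2
      + (ρ t)⁻¹ ^ 2 * F ((y - a t) / ρ t))
    (W G X : ℝ → ℝ)
    (hW : ∀ t, W t = deriv a t * ρ t - a t * deriv ρ t)
    (hG : ∀ t, G t = ∫ s in t'..t, (W s)^2 / (2 * (ρ s)^2))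
    (hX : ∀ t, X t = (deriv ρ t / (2 * ρ t)) * (x t)^2 + (W t / ρ t) * x t - G t) :
    ∀ t : ℝ,
      1/2 * (deriv x t)^2 - V (x t) t
      = deriv X t
        + ((ρ t)^2 / 2 * (deriv (fun s => (x s - a s) / ρ s) t)^2
            - (ρ t)⁻¹ ^ 2 * F ((x t - a t) / ρ t)) := by
  intro t
  have h2 : (2:ℕ∞) = 1 + 1 := by norm_num
  have hρdiff : Differentiable ℝ ρ := hρ.differentiable (by norm_num)
  have hρ' : ContDiff ℝ 1 (deriv ρ) := by
    have := ContDiff.iterate_deriv' 1 1 (show ContDiff ℝ ((1+1:ℕ):ℕ∞) ρ by exact_mod_cast hρ)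
    simpa using this
  have hρ'diff : Differentiable ℝ (deriv ρ) := hρ'.differentiable one_ne_zero
  have hadiff : Differentiable ℝ a := ha.differentiable (by norm_num)
  have ha' : ContDiff ℝ 1 (deriv a) := by
    have := ContDiff.iterate_deriv' 1 1 (show ContDiff ℝ ((1+1:ℕ):ℕ∞) a by exact_mod_cast ha)
    simpa using this
  have ha'diff : Differentiable ℝ (deriv a) := ha'.differentiable one_ne_zero
  have hxdiff : Differentiable ℝ x := hx.differentiable one_ne_zero
  have hρne : ∀ s, ρ s ≠ 0 := fun s => (hρpos s).ne'
  have Hρ : HasDerivAt ρ (deriv ρ t) t := (hρdiff t).hasDerivAt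
  have Hρ' : HasDerivAt (deriv ρ) (deriv (deriv ρ) t) t := (hρ'diff t).hasDerivAt
  have Ha : HasDerivAt a (deriv a t) t := (hadiff t).hasDerivAt
  have Ha' : HasDerivAt (deriv a) (deriv (deriv a) t) t := (ha'diff t).hasDerivAt
  have Hx : HasDerivAt x (deriv x t) t := (hxdiff t).hasDerivAt
  have hWeq : W = fun s => deriv a s * ρ s - a s * deriv ρ s := funext hW
  have hWcont : Continuous W := by
    rw [hWeq]
    exact (ha'.continuous.mul hρdiff.continuous).sub
      (hadiff.continuous.mul hρ'.continuous)
  have hintcont : Continuous (fun s => (W s)^2 / (2 * (ρ s)^2)) :=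
    (hWcont.pow 2).div (continuous_const.mul (hρ.continuous.pow 2))
      (fun s => by have := hρpos s; positivity)
  have HG : HasDerivAt G ((W t)^2 / (2 * (ρ t)^2)) t := by
    have hGeq : G = fun u => ∫ s in t'..u, (W s)^2 / (2 * (ρ s)^2) := funext hG
    rw [hGeq]
    exact (hintcont.integral_hasStrictDerivAt t' t).hasDerivAt
  have HW : HasDerivAt W
      ((deriv (deriv a) t * ρ t + deriv a t * deriv ρ t)
        - (deriv a t * deriv ρ t + a t * deriv (deriv ρ) t)) t := by
    rw [hWeq]; exact (Ha'.mul Hρ).sub (Ha.mul Hρ')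
  have H1 := (Hρ'.div (Hρ.const_mul 2) (by simpa using hρne t)).mul (Hx.pow 2)
  have H2 := (HW.div Hρ (hρne t)).mul Hx
  have hXeq : X = fun u => (deriv ρ u / (2 * ρ u)) * (x u)^2 + (W u / ρ u) * x u - G u :=
    funext hX
  have Hq := (Hx.sub Ha).div Hρ (hρne t)
  rw [hXeq, show deriv (fun u => (deriv ρ u / (2 * ρ u)) * (x u)^2 + (W u / ρ u) * x u - G u) t = _
    from ((H1.add H2).sub HG).deriv, show deriv (fun s => (x s - a s) / ρ s) t = _ from Hq.deriv,
    hV, hW t]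
  simp only [Pi.mul_apply, Pi.div_apply, Pi.pow_apply, Pi.sub_apply, hW t]
  have h := hρne t
  field_simp
  ring
end
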